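/- Let p, q ∈ [0,1] be real numbers with 1 − q(1−p) ≠ 0. Then for all real numbers a, b: p·a + (1−p)·(q·b + (1−q)·1) = q(1−p)·b + (1 − q(1−p))·( (p/(1−q(1−p)))·a + (1 − p/(1−q(1−p)))·1 ). (This is the ΔQSD equivalence o₁ ⇌[p] (o₂ ⇌[q] ⊤) = o₂ ⇌[q(1−p)] (o₁ ⇌[p/(1−q(1−p))] ⊤).) -/

import Mathlib

/-- The ΔQSD equivalence
`o₁ ⇌[p] (o₂ ⇌[q] ⊤) = o₂ ⇌[q(1−p)] (o₁ ⇌[p/(1−q(1−p))] ⊤)`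
pointwise on ΔQ values, where ⊤ has ΔQ value 1. -/
theorem probChoice_top_swap (p q : ℝ)
    (hp : p ∈ Set.Icc (0:ℝ) 1) (hq : q ∈ Set.Icc (0:ℝ) 1)
    (h : 1 - q * (1 - p) ≠ 0) :
    ∀ a b : ℝ,
      p * a + (1 - p) * (q * b + (1 - q) * 1)
        = q * (1 - p) * b + (1 - q * (1 - p)) *
            ((p / (1 - q * (1 - p))) * a + (1 - p / (1 - q * (1 - p))) * 1) := by
  intro a b
  have key : (1 - q * (1 - p)) * (p / (1 - q * (1 - p))) = p := mul_div_cancel₀ p h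
  linear_combination (1 - a) * key
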